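/- arXiv:1801.08934 — 3 statements merged into one kernel-verified Lean document; each statement's English description precedes it below -/
import Mathlib

section
/- For every real z with 0 < z < 1, the function g(z) := Σ_{k≥1} z^k(1−z^k)/(k(k+1)) satisfies g(z) = ((z−1)/z^2)·(log(1−z) + (1+z)·log(1+z)). -/
open Real

lemma aux_hasSum (x : ℝ) (hx0 : 0 < x) (hx1 : x < 1) :
    HasSum (fun k : ℕ => x ^ (k + 1) / ((k + 1) * (k + 2)))
      ((-Real.log (1 - x)) - ((-Real.log (1 - x)) - x) / x) := by
  have hxne : x ≠ 0 := ne_of_gt hx0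
  have habs : |x| < 1 := by rw [abs_of_pos hx0]; exact hx1
  have A := hasSum_pow_div_log_of_abs_lt_one habs
  have B : HasSum (fun n : ℕ => x ^ (n + 1 + 1) / (n + 1 + 1))
      ((-Real.log (1 - x)) - x) := by
    have h := (hasSum_nat_add_iff' (f := fun n : ℕ => x ^ (n + 1) / (n + 1)) 1).mpr A
    simp only [Finset.range_one, Finset.sum_singleton] at h
    norm_num at h
    convert h using 2 with n
  have C := B.div_const x
  have C' : HasSum (fun n : ℕ => x ^ (n + 1) / (n + 2))
      (((-Real.log (1 - x)) - x) / x) := by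
    have key : (fun n : ℕ => x ^ (n + 1) / (n + 2))
        = fun n : ℕ => x ^ (n + 1 + 1) / (n + 1 + 1) / x := by
      funext n
      have h2 : ((n : ℝ) + 1 + 1) ≠ 0 := by positivity
      rw [pow_succ]
      field_simp
      ring
    rw [key]; exact C
  have D := A.sub C'
  have key2 : (fun k : ℕ => x ^ (k + 1) / ((k + 1) * (k + 2)))
      = fun n : ℕ => x ^ (n + 1) / (n + 1) - x ^ (n + 1) / (n + 2) := by
    funext n
    have h1 : ((n : ℝ) + 1) ≠ 0 := by positivity
    have h2 : ((n : ℝ) + 2) ≠ 0 := by positivity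
    field_simp
    ring
  rw [key2]; exact D

/-- For `0 < z < 1`, `g(z) = ∑_{k ≥ 1} z^k(1-z^k)/(k(k+1))
= ((z-1)/z²)(log(1-z) + (1+z)·log(1+z))`. -/
theorem stmt_2 (z : ℝ) (hz : z ∈ Set.Ioo (0 : ℝ) 1) :
    ∑' k : ℕ, z ^ (k + 1) * (1 - z ^ (k + 1)) / ((k + 1) * (k + 2))
      = (z - 1) / z ^ 2 * (Real.log (1 - z) + (1 + z) * Real.log (1 + z)) := by
  obtain ⟨hz0, hz1⟩ := hz
  have hzne : z ≠ 0 := ne_of_gt hz0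
  have hz20 : 0 < z ^ 2 := by positivity
  have hz21 : z ^ 2 < 1 := by nlinarith
  have H1 := aux_hasSum z hz0 hz1
  have H2 := aux_hasSum (z ^ 2) hz20 hz21
  have D := H1.sub H2
  have key : (fun k : ℕ => z ^ (k + 1) * (1 - z ^ (k + 1)) / ((k + 1) * (k + 2)))
      = fun k : ℕ => z ^ (k + 1) / ((k + 1) * (k + 2))
        - (z ^ 2) ^ (k + 1) / ((k + 1) * (k + 2)) := by
    funext k
    have h1 : ((k : ℝ) + 1) * ((k : ℝ) + 2) ≠ 0 := by positivity
    rw [← pow_mul]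
    rw [show 2 * (k + 1) = (k + 1) + (k + 1) by ring, pow_add]
    field_simp
    ring
  rw [key, D.tsum_eq]
  have hlog : Real.log (1 - z ^ 2) = Real.log (1 - z) + Real.log (1 + z) := by
    rw [show (1 : ℝ) - z ^ 2 = (1 - z) * (1 + z) by ring,
      Real.log_mul (by linarith) (by linarith)]
  rw [hlog]
  field_simp
  ring
end

section
/- Let θ ∈ (0,1) and define coefficients a_{ik} for k ≥ i ≥ 1 by a_{ii} = θ^{1/2}(1−θ)^{i/2} and a_{ik} = −θ^{3/2}(1−θ)^{k−i/2−1} for k > i. With p_k = θ(1−θ)^{k−1}, for all positive integers k, l: Σ_{i=1}^{min(k,l)} a_{ik}·a_{il} = p_k·1{k=l} − p_k·p_l. -/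
theorem aux_stmt10 (θ : ℝ) (hθ0 : 0 < θ) (hθ1 : θ < 1)
    (a : ℕ → ℕ → ℝ)
    (ha_diag : ∀ i : ℕ, 1 ≤ i → a i i = θ ^ ((1 : ℝ) / 2) * (1 - θ) ^ ((i : ℝ) / 2))
    (ha_off : ∀ i k : ℕ, 1 ≤ i → i < k →
      a i k = -(θ ^ ((3 : ℝ) / 2) * (1 - θ) ^ ((k : ℝ) - (i : ℝ) / 2 - 1)))
    (k l : ℕ) (hk : 1 ≤ k) (hl : 1 ≤ l) (hkl : k ≤ l) :
    ∑ i ∈ Finset.Icc 1 k, a i k * a i l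
      = (if k = l then θ * (1 - θ) ^ (k - 1) else 0)
        - θ * (1 - θ) ^ (k - 1) * (θ * (1 - θ) ^ (l - 1)) := by
  have hq : (0:ℝ) < 1 - θ := by linarith
  obtain ⟨k', rfl⟩ : ∃ k', k = k' + 1 := ⟨k - 1, by omega⟩
  rw [← Finset.Ico_add_one_right_eq_Icc, Finset.sum_Ico_eq_sum_range]
  rw [show k'+1+1-1 = k'+1 from rfl]
  rw [Finset.sum_range_succ]
  have h32 : θ ^ ((3:ℝ)/2) * θ ^ ((3:ℝ)/2) = θ ^ (3:ℕ) := by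
    rw [← Real.rpow_natCast θ 3, ← Real.rpow_add hθ0]; norm_num
  have hsum : ∑ i ∈ Finset.range k', a (1+i) (k'+1) * a (1+i) l
      = ∑ i ∈ Finset.range k', θ^3 * (1-θ)^(l-1) * (1-θ)^(k'-1-i) := by
    apply Finset.sum_congr rfl
    intro i hi
    rw [Finset.mem_range] at hi
    obtain ⟨m, rfl⟩ : ∃ m, k' = m + i + 1 := ⟨k' - 1 - i, by omega⟩
    obtain ⟨d, rfl⟩ : ∃ d, l = d + (m + i + 1 + 1) := ⟨l - (m+i+1+1), by omega⟩
    rw [ha_off (1+i) (m+i+1+1) (by omega) (by omega),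
        ha_off (1+i) (d+(m+i+1+1)) (by omega) (by omega)]
    rw [neg_mul_neg, mul_mul_mul_comm, h32, ← Real.rpow_add hq]
    have he1 : ((m+i+1+1:ℕ):ℝ) - ((1+i:ℕ):ℝ)/2 - 1 + (((d+(m+i+1+1):ℕ):ℝ) - ((1+i:ℕ):ℝ)/2 - 1)
        = (((d+(m+i+1+1) - 1) + (m+i+1 - 1 - i) : ℕ) : ℝ) := by
      push_cast [Nat.add_sub_cancel, show m+i+1-1-i = m by omega,
        show d+(m+i+1+1)-1 = d+m+i+1 by omega]
      ring
    rw [he1, Real.rpow_natCast, pow_add]; ring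
  rw [hsum,
    Finset.sum_range_reflect (fun j => θ^3 * (1-θ)^(l-1) * (1-θ)^j) k',
    ← Finset.mul_sum]
  have geom : θ * ∑ i ∈ Finset.range k', (1-θ)^i = 1 - (1-θ)^k' := by
    have h := geom_sum_mul (1-θ) k'
    linear_combination (-1 : ℝ) * h
  simp only [show 1+k' = k'+1 from Nat.add_comm 1 k']
  rcases eq_or_lt_of_le hkl with h | h
  · subst h
    rw [ha_diag (k'+1) (by omega)]
    have hsq : (θ ^ ((1:ℝ)/2) * (1-θ) ^ (((k'+1:ℕ):ℝ)/2)) *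
        (θ ^ ((1:ℝ)/2) * (1-θ) ^ (((k'+1:ℕ):ℝ)/2)) = θ * (1-θ)^(k'+1) := by
      rw [mul_mul_mul_comm, ← Real.rpow_add hθ0, ← Real.rpow_add hq,
        show (1:ℝ)/2 + 1/2 = 1 by norm_num,
        show ((k'+1:ℕ):ℝ)/2 + ((k'+1:ℕ):ℝ)/2 = ((k'+1:ℕ):ℝ) by ring,
        Real.rpow_one, Real.rpow_natCast]
    rw [hsq, if_pos rfl]
    rw [show k'+1-1 = k' from rfl]
    linear_combination (θ^2 * (1-θ)^k') * geom
  · rw [if_neg (by omega)]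
    rw [ha_diag (k'+1) (by omega), ha_off (k'+1) l (by omega) h]
    have hlast : (θ ^ ((1:ℝ)/2) * (1-θ) ^ (((k'+1:ℕ):ℝ)/2)) *
        (-(θ ^ ((3:ℝ)/2) * (1-θ) ^ ((l:ℝ) - ((k'+1:ℕ):ℝ)/2 - 1)))
        = -(θ^2 * (1-θ)^(l-1)) := by
      rw [mul_neg, mul_mul_mul_comm, ← Real.rpow_add hθ0, ← Real.rpow_add hq,
        show (1:ℝ)/2 + 3/2 = ((2:ℕ):ℝ) by norm_num,
        show ((k'+1:ℕ):ℝ)/2 + ((l:ℝ) - ((k'+1:ℕ):ℝ)/2 - 1) = ((l - 1 : ℕ):ℝ) by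
          push_cast [Nat.cast_sub hl]; ring,
        Real.rpow_natCast, Real.rpow_natCast]
    rw [hlast, show k'+1-1 = k' from rfl]
    linear_combination (θ^2 * (1-θ)^(l-1)) * geom

/-- With `a_{ii} = θ^{1/2}(1-θ)^{i/2}`, `a_{ik} = −θ^{3/2}(1-θ)^{k−i/2−1}` for `k > i`,
and `p_k = θ(1-θ)^{k-1}`, one has
`∑_{i=1}^{min(k,l)} a_{ik} a_{il} = p_k·1{k=l} − p_k p_l`. -/
theorem stmt_10 (θ : ℝ) (hθ : θ ∈ Set.Ioo (0 : ℝ) 1)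
    (a : ℕ → ℕ → ℝ)
    (ha_diag : ∀ i : ℕ, 1 ≤ i → a i i = θ ^ ((1 : ℝ) / 2) * (1 - θ) ^ ((i : ℝ) / 2))
    (ha_off : ∀ i k : ℕ, 1 ≤ i → i < k →
      a i k = -(θ ^ ((3 : ℝ) / 2) * (1 - θ) ^ ((k : ℝ) - (i : ℝ) / 2 - 1)))
    (k l : ℕ) (hk : 1 ≤ k) (hl : 1 ≤ l) :
    ∑ i ∈ Finset.Icc 1 (min k l), a i k * a i l
      = (if k = l then θ * (1 - θ) ^ (k - 1) else 0)
        - θ * (1 - θ) ^ (k - 1) * (θ * (1 - θ) ^ (l - 1)) := by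
  obtain ⟨hθ0, hθ1⟩ := hθ
  rcases le_total k l with hkl | hkl
  · rw [min_eq_left hkl]
    exact aux_stmt10 θ hθ0 hθ1 a ha_diag ha_off k l hk hl hkl
  · rw [min_eq_right hkl]
    have h := aux_stmt10 θ hθ0 hθ1 a ha_diag ha_off l k hl hk hkl
    rw [show ∑ i ∈ Finset.Icc 1 l, a i k * a i l
        = ∑ i ∈ Finset.Icc 1 l, a i l * a i k by
      exact Finset.sum_congr rfl fun i _ => mul_comm _ _, h]
    by_cases hekl : k = l
    · subst hekl; ring
    · rw [if_neg hekl, if_neg (Ne.symm hekl)]; ring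
end

section
/- Let θ ∈ (0,1), p_k = θ(1−θ)^{k−1}, and define for 0 ≤ s, t ≤ 1 the function K(t,s) = Σ_{k≥1} min(t/k, s/k) p_k − Σ_{k,l≥1} min(t/k, s/l) p_k p_l. Then K(t,t) = g(1−θ)·t for all t ∈ [0,1], where g(z) = Σ_{k≥1} z^k(1−z^k)/(k(k+1)). -/
set_option maxHeartbeats 1000000

noncomputable def cc (j : ℕ) : ℝ := 1/((j:ℝ)+1) - 1/((j:ℝ)+2)

lemma cc_nonneg (j : ℕ) : 0 ≤ cc j := by
  have h1 : (0:ℝ) < (j:ℝ)+1 := by positivity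
  have h : 1/((j:ℝ)+2) ≤ 1/((j:ℝ)+1) := by
    apply one_div_le_one_div_of_le h1; linarith
  show (0:ℝ) ≤ 1/((j:ℝ)+1) - 1/((j:ℝ)+2)
  linarith

lemma tele (k : ℕ) :
    HasSum (fun j : ℕ => if k ≤ j then cc j else 0) (1/((k:ℝ)+1)) := by
  have key : HasSum (fun i : ℕ => (if k ≤ i + k then cc (i+k) else 0)) (1/((k:ℝ)+1)) := by
    have h0 : ∀ i : ℕ, (if k ≤ i + k then cc (i+k) else 0)
        = 1/((i:ℝ)+(k:ℝ)+1) - 1/((i:ℝ)+(k:ℝ)+2) := by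
      intro i
      rw [if_pos (Nat.le_add_left k i)]
      simp only [cc]; push_cast; ring
    rw [funext h0]
    have hnn : ∀ i : ℕ, 0 ≤ 1/((i:ℝ)+(k:ℝ)+1) - 1/((i:ℝ)+(k:ℝ)+2) := by
      intro i
      have h1 : (0:ℝ) < (i:ℝ)+(k:ℝ)+1 := by positivity
      have : 1/((i:ℝ)+(k:ℝ)+2) ≤ 1/((i:ℝ)+(k:ℝ)+1) := by
        apply one_div_le_one_div_of_le h1; linarith
      linarith
    rw [hasSum_iff_tendsto_nat_of_nonneg hnn]
    have hps : ∀ n : ℕ, ∑ i ∈ Finset.range n, (1/((i:ℝ)+(k:ℝ)+1) - 1/((i:ℝ)+(k:ℝ)+2))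
        = 1/((k:ℝ)+1) - 1/((n:ℝ)+(k:ℝ)+1) := by
      intro n
      have h2 := Finset.sum_range_sub' (f := fun i : ℕ => 1/((i:ℝ)+(k:ℝ)+1)) n
      calc ∑ i ∈ Finset.range n, (1/((i:ℝ)+(k:ℝ)+1) - 1/((i:ℝ)+(k:ℝ)+2))
          = ∑ i ∈ Finset.range n, (1/((i:ℝ)+(k:ℝ)+1) - 1/(((i+1:ℕ):ℝ)+(k:ℝ)+1)) := by
            apply Finset.sum_congr rfl; intro i _; push_cast; ring
        _ = 1/(((0:ℕ):ℝ)+(k:ℝ)+1) - 1/((n:ℝ)+(k:ℝ)+1) := h2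
        _ = 1/((k:ℝ)+1) - 1/((n:ℝ)+(k:ℝ)+1) := by norm_num
    rw [funext hps]
    have htd : Filter.Tendsto (fun n : ℕ => 1/((n:ℝ)+(k:ℝ)+1)) Filter.atTop (nhds 0) := by
      simp only [one_div]
      apply Filter.Tendsto.inv_tendsto_atTop
      apply Filter.tendsto_atTop_add_const_right
      apply Filter.tendsto_atTop_add_const_right
      exact tendsto_natCast_atTop_atTop
    simpa using Filter.Tendsto.const_sub (1/((k:ℝ)+1)) htd
  have hsum0 : ∑ i ∈ Finset.range k, (if k ≤ i then cc i else 0) = 0 :=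
    Finset.sum_eq_zero (fun i hi => if_neg (by simpa using Finset.mem_range.mp hi))
  rw [← hasSum_nat_add_iff' k, hsum0, sub_zero]
  exact key


lemma min_div_eq {t : ℝ} (ht : 0 ≤ t) (k l : ℕ) :
    min (t/((k:ℝ)+1)) (t/((l:ℝ)+1)) = t/(((max k l : ℕ):ℝ)+1) := by
  rcases le_total k l with h | h
  · rw [max_eq_right h, min_eq_right (by gcongr <;> exact_mod_cast h)]
  · rw [max_eq_left h, min_eq_left (by gcongr <;> exact_mod_cast h)]

/-- With `p_k = θ(1-θ)^{k-1}` and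
`K(t,s) = ∑_{k ≥ 1} min(t/k, s/k) p_k − ∑_{k,l ≥ 1} min(t/k, s/l) p_k p_l`,
one has `K(t,t) = g(1-θ)·t` where `g(z) = ∑_{k ≥ 1} z^k(1-z^k)/(k(k+1))`. -/
theorem stmt_18 (θ : ℝ) (hθ : θ ∈ Set.Ioo (0 : ℝ) 1) (t : ℝ) (ht : t ∈ Set.Icc (0 : ℝ) 1) :
    (∑' k : ℕ, min (t / (k + 1)) (t / (k + 1)) * (θ * (1 - θ) ^ k))
      - ∑' kl : ℕ × ℕ, min (t / (kl.1 + 1)) (t / (kl.2 + 1))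
          * (θ * (1 - θ) ^ kl.1) * (θ * (1 - θ) ^ kl.2)
      = (∑' k : ℕ, (1 - θ) ^ (k + 1) * (1 - (1 - θ) ^ (k + 1)) / ((k + 1) * (k + 2))) * t := by
  obtain ⟨hθ0, hθ1⟩ := hθ
  obtain ⟨ht0, ht1⟩ := ht
  set z : ℝ := 1 - θ with hz
  have hz0 : 0 < z := by simp [hz]; linarith
  have hz1 : z < 1 := by simp [hz]; linarith
  have hzpow : ∀ n : ℕ, z ^ n ≤ 1 := fun n => pow_le_one₀ hz0.le hz1.le
  have hzpow0 : ∀ n : ℕ, 0 ≤ z ^ n := fun n => pow_nonneg hz0.le n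
  -- geometric partial sums
  have hgeom : ∀ j : ℕ, θ * ∑ k ∈ Finset.range (j+1), z ^ k = 1 - z ^ (j+1) := by
    intro j
    rw [geom_sum_eq (by linarith : z ≠ 1), show z - 1 = -θ from by rw [hz]; ring]
    field_simp [ne_of_gt hθ0]
    ring
  have hsummable_geom : Summable (fun k : ℕ => z ^ k) :=
    summable_geometric_of_lt_one hz0.le hz1
  -- ### Sum 1
  have h1 : ∀ k : ℕ, HasSum (fun j : ℕ => (if k ≤ j then cc j else 0) * (t * θ * z ^ k))
      (min (t / ((k:ℝ) + 1)) (t / ((k:ℝ) + 1)) * (θ * z ^ k)) := by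
    intro k
    rw [min_self]
    have := (tele k).mul_right (t * θ * z ^ k)
    convert this using 1
    · rfl
    field_simp
  have hF_nonneg : ∀ p : ℕ × ℕ, 0 ≤ (if p.1 ≤ p.2 then cc p.2 else 0) * (t * θ * z ^ p.1) := by
    intro p
    apply mul_nonneg
    · split <;> [exact cc_nonneg _; rfl]
    · positivity
  have hrow : ∀ k : ℕ, Summable (fun j : ℕ => (if k ≤ j then cc j else 0) * (t * θ * z ^ k)) :=
    fun k => ((tele k).mul_right (t * θ * z ^ k)).summable
  have hcol : ∀ j : ℕ, Summable (fun k : ℕ => (if k ≤ j then cc j else 0) * (t * θ * z ^ k)) := by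
    intro j
    apply summable_of_ne_finset_zero (s := Finset.range (j+1))
    intro k hk
    rw [if_neg, zero_mul]
    intro hle
    exact hk (Finset.mem_range.mpr (Nat.lt_succ_of_le hle))
  have hF_summable : Summable (Function.uncurry
      fun (k j : ℕ) => (if k ≤ j then cc j else 0) * (t * θ * z ^ k)) := by
    have : Summable (fun p : ℕ × ℕ => (if p.1 ≤ p.2 then cc p.2 else 0) * (t * θ * z ^ p.1)) := ?_
    · exact this
    rw [summable_prod_of_nonneg (fun p => hF_nonneg p)]
    refine ⟨fun k => hrow k, ?_⟩
    apply Summable.of_nonneg_of_le (fun k => ?_) (fun k => ?_)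
      ((hsummable_geom.mul_left (t * θ)))
    · exact tsum_nonneg (fun j => hF_nonneg (k, j))
    · rw [((tele k).mul_right (t * θ * z ^ k)).tsum_eq]
      have hk1 : (0:ℝ) < (k:ℝ) + 1 := by positivity
      rw [div_mul_eq_mul_div, one_mul]
      rw [div_le_iff₀ hk1]
      nlinarith [mul_nonneg (mul_nonneg ht0 hθ0.le) (hzpow0 k), Nat.cast_nonneg (α := ℝ) k]
  have hsum1 : (∑' k : ℕ, min (t / ((k:ℝ) + 1)) (t / ((k:ℝ) + 1)) * (θ * z ^ k))
      = ∑' j : ℕ, t * cc j * (1 - z ^ (j+1)) := by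
    have e1 : (∑' k : ℕ, min (t / ((k:ℝ) + 1)) (t / ((k:ℝ) + 1)) * (θ * z ^ k))
        = ∑' (k : ℕ) (j : ℕ), (if k ≤ j then cc j else 0) * (t * θ * z ^ k) :=
      tsum_congr fun k => (h1 k).tsum_eq.symm
    rw [e1, ← Summable.tsum_comm' hF_summable hrow hcol]
    apply tsum_congr
    intro j
    rw [tsum_eq_sum (s := Finset.range (j+1)) (fun k hk => by
      rw [if_neg]; · ring
      intro hle
      exact hk (Finset.mem_range.mpr (Nat.lt_succ_of_le hle)))]
    have : ∑ k ∈ Finset.range (j+1), (if k ≤ j then cc j else 0) * (t * θ * z ^ k)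
        = (t * cc j) * (θ * ∑ k ∈ Finset.range (j+1), z ^ k) := by
      rw [Finset.mul_sum, Finset.mul_sum]
      apply Finset.sum_congr rfl
      intro k hk
      rw [if_pos (Nat.lt_succ_iff.mp (Finset.mem_range.mp hk))]
      ring
    rw [this, hgeom j]
  -- ### Sum 2
  have h2 : ∀ p : ℕ × ℕ, HasSum
      (fun j : ℕ => (if max p.1 p.2 ≤ j then cc j else 0) * (t * (θ * z ^ p.1) * (θ * z ^ p.2)))
      (min (t / ((p.1:ℝ) + 1)) (t / ((p.2:ℝ) + 1)) * (θ * z ^ p.1) * (θ * z ^ p.2)) := by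
    intro p
    have := (tele (max p.1 p.2)).mul_right (t * (θ * z ^ p.1) * (θ * z ^ p.2))
    convert this using 1
    · rfl
    rw [min_div_eq ht0]
    field_simp
    try ring
  have hG_nonneg : ∀ q : (ℕ × ℕ) × ℕ,
      0 ≤ (if max q.1.1 q.1.2 ≤ q.2 then cc q.2 else 0) * (t * (θ * z ^ q.1.1) * (θ * z ^ q.1.2)) := by
    intro q
    apply mul_nonneg
    · split <;> [exact cc_nonneg _; rfl]
    · positivity
  have hrow2 : ∀ p : ℕ × ℕ, Summable
      (fun j : ℕ => (if max p.1 p.2 ≤ j then cc j else 0) * (t * (θ * z ^ p.1) * (θ * z ^ p.2))) :=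
    fun p => ((tele (max p.1 p.2)).mul_right _).summable
  have hcol2 : ∀ j : ℕ, Summable
      (fun p : ℕ × ℕ => (if max p.1 p.2 ≤ j then cc j else 0) * (t * (θ * z ^ p.1) * (θ * z ^ p.2))) := by
    intro j
    apply summable_of_ne_finset_zero (s := Finset.range (j+1) ×ˢ Finset.range (j+1))
    intro p hp
    rw [if_neg, zero_mul]
    intro hle
    apply hp
    rw [Finset.mem_product, Finset.mem_range, Finset.mem_range]
    exact ⟨Nat.lt_succ_of_le (le_trans (le_max_left _ _) hle),
      Nat.lt_succ_of_le (le_trans (le_max_right _ _) hle)⟩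
  have hzz : Summable (fun p : ℕ × ℕ => t * θ * θ * (z ^ p.1 * z ^ p.2)) :=
    (hsummable_geom.mul_of_nonneg hsummable_geom hzpow0 hzpow0).mul_left (t * θ * θ)
  have hG_summable : Summable (Function.uncurry
      fun (p : ℕ × ℕ) (j : ℕ) => (if max p.1 p.2 ≤ j then cc j else 0)
        * (t * (θ * z ^ p.1) * (θ * z ^ p.2))) := by
    have : Summable (fun q : (ℕ × ℕ) × ℕ => (if max q.1.1 q.1.2 ≤ q.2 then cc q.2 else 0)
        * (t * (θ * z ^ q.1.1) * (θ * z ^ q.1.2))) := ?_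
    · exact this
    rw [summable_prod_of_nonneg (fun q => hG_nonneg q)]
    refine ⟨fun p => hrow2 p, ?_⟩
    apply Summable.of_nonneg_of_le (fun p => ?_) (fun p => ?_) hzz
    · exact tsum_nonneg (fun j => hG_nonneg (p, j))
    · rw [((tele (max p.1 p.2)).mul_right (t * (θ * z ^ p.1) * (θ * z ^ p.2))).tsum_eq]
      have hm1 : (0:ℝ) < ((max p.1 p.2 : ℕ):ℝ) + 1 := by positivity
      have hle1 : 1 / (((max p.1 p.2 : ℕ):ℝ) + 1) ≤ 1 := by
        rw [div_le_one hm1]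
        have : (0:ℝ) ≤ ((max p.1 p.2 : ℕ):ℝ) := Nat.cast_nonneg _
        linarith
      have hC : 0 ≤ t * (θ * z ^ p.1) * (θ * z ^ p.2) := by positivity
      calc 1 / (((max p.1 p.2 : ℕ):ℝ) + 1) * (t * (θ * z ^ p.1) * (θ * z ^ p.2))
          ≤ 1 * (t * (θ * z ^ p.1) * (θ * z ^ p.2)) := by
            exact mul_le_mul_of_nonneg_right hle1 hC
        _ ≤ t * θ * θ * (z ^ p.1 * z ^ p.2) := by
            nlinarith [hzpow0 p.1, hzpow0 p.2, mul_nonneg (hzpow0 p.1) (hzpow0 p.2)]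
  have hsum2 : (∑' kl : ℕ × ℕ, min (t / ((kl.1:ℝ) + 1)) (t / ((kl.2:ℝ) + 1))
        * (θ * z ^ kl.1) * (θ * z ^ kl.2))
      = ∑' j : ℕ, t * cc j * (1 - z ^ (j+1)) ^ 2 := by
    have e2 : (∑' kl : ℕ × ℕ, min (t / ((kl.1:ℝ) + 1)) (t / ((kl.2:ℝ) + 1))
          * (θ * z ^ kl.1) * (θ * z ^ kl.2))
        = ∑' (p : ℕ × ℕ) (j : ℕ), (if max p.1 p.2 ≤ j then cc j else 0)
            * (t * (θ * z ^ p.1) * (θ * z ^ p.2)) :=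
      tsum_congr fun p => (h2 p).tsum_eq.symm
    rw [e2, ← Summable.tsum_comm' hG_summable hrow2 hcol2]
    apply tsum_congr
    intro j
    rw [tsum_eq_sum (s := Finset.range (j+1) ×ˢ Finset.range (j+1)) (fun p hp => by
      rw [if_neg, zero_mul]
      intro hle
      apply hp
      rw [Finset.mem_product, Finset.mem_range, Finset.mem_range]
      exact ⟨Nat.lt_succ_of_le (le_trans (le_max_left _ _) hle),
        Nat.lt_succ_of_le (le_trans (le_max_right _ _) hle)⟩)]
    have step : ∑ p ∈ Finset.range (j+1) ×ˢ Finset.range (j+1),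
        (if max p.1 p.2 ≤ j then cc j else 0) * (t * (θ * z ^ p.1) * (θ * z ^ p.2))
        = (t * cc j) * ((θ * ∑ k ∈ Finset.range (j+1), z ^ k)
            * (θ * ∑ l ∈ Finset.range (j+1), z ^ l)) := by
      rw [Finset.sum_product]
      have expand : (t * cc j) * ((θ * ∑ k ∈ Finset.range (j+1), z ^ k)
            * (θ * ∑ l ∈ Finset.range (j+1), z ^ l))
          = ∑ k ∈ Finset.range (j+1), ∑ l ∈ Finset.range (j+1),
              (t * cc j) * ((θ * z ^ k) * (θ * z ^ l)) := by
        simp only [Finset.mul_sum, Finset.sum_mul]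
        apply Finset.sum_congr rfl
        intro k _
        apply Finset.sum_congr rfl
        intro l _
        ring
      rw [expand]
      apply Finset.sum_congr rfl
      intro k hk
      apply Finset.sum_congr rfl
      intro l hl
      rw [if_pos (max_le (Nat.lt_succ_iff.mp (Finset.mem_range.mp hk))
        (Nat.lt_succ_iff.mp (Finset.mem_range.mp hl)))]
      ring
    rw [step, hgeom j]
    ring
  -- ### Assembly
  rw [hsum1, hsum2]
  have hcc_summable : Summable cc := by
    have := (tele 0).summable
    simpa using this
  have hfac : ∀ j : ℕ, 0 ≤ 1 - z ^ (j+1) := fun j => by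
    have := hzpow (j+1); linarith
  have hfac1 : ∀ j : ℕ, 1 - z ^ (j+1) ≤ 1 := fun j => by
    have := hzpow0 (j+1); linarith
  have hs1 : Summable (fun j : ℕ => t * cc j * (1 - z ^ (j+1))) := by
    apply Summable.of_nonneg_of_le
      (fun j => mul_nonneg (mul_nonneg ht0 (cc_nonneg j)) (hfac j)) (fun j => ?_) hcc_summable
    have hb : t * (1 - z ^ (j+1)) ≤ 1 := mul_le_one₀ ht1 (hfac j) (hfac1 j)
    calc t * cc j * (1 - z ^ (j+1)) = cc j * (t * (1 - z ^ (j+1))) := by ring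
      _ ≤ cc j * 1 := mul_le_mul_of_nonneg_left hb (cc_nonneg j)
      _ = cc j := mul_one _
  have hs2 : Summable (fun j : ℕ => t * cc j * (1 - z ^ (j+1)) ^ 2) := by
    apply Summable.of_nonneg_of_le
      (fun j => mul_nonneg (mul_nonneg ht0 (cc_nonneg j)) (sq_nonneg _)) (fun j => ?_) hcc_summable
    have hsq : (1 - z ^ (j+1)) ^ 2 ≤ 1 := by nlinarith [hfac j, hfac1 j]
    have hb : t * (1 - z ^ (j+1)) ^ 2 ≤ 1 := mul_le_one₀ ht1 (sq_nonneg _) hsq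
    calc t * cc j * (1 - z ^ (j+1)) ^ 2 = cc j * (t * (1 - z ^ (j+1)) ^ 2) := by ring
      _ ≤ cc j * 1 := mul_le_mul_of_nonneg_left hb (cc_nonneg j)
      _ = cc j := mul_one _
  rw [← Summable.tsum_sub hs1 hs2, ← tsum_mul_right]
  apply tsum_congr
  intro j
  have hcc_eq : cc j = 1 / (((j:ℝ)+1) * ((j:ℝ)+2)) := by
    have h1 : ((j:ℝ)+1) ≠ 0 := by positivity
    have h2 : ((j:ℝ)+2) ≠ 0 := by positivity
    show 1/((j:ℝ)+1) - 1/((j:ℝ)+2) = 1 / (((j:ℝ)+1) * ((j:ℝ)+2))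
    field_simp
    ring
  rw [hcc_eq]
  have h1 : ((j:ℝ)+1) ≠ 0 := by positivity
  have h2 : ((j:ℝ)+2) ≠ 0 := by positivity
  field_simp
  ring
end
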